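/- For any adaptive strategy P⃗ⁿ and test f_n on (X×Y)ⁿ, and any s ≤ 0: (1−s) log E_{Q_{W,P⃗ⁿ}}[1−f_n] ≤ −s log E_{Q_{W̄,P⃗ⁿ}}[1−f_n] + n·sup_{x∈X} φ(s|W_x‖W̄_x). -/

import Mathlib

open Filter

/-- `W` is a (classical) channel from `X` to `Y` with full-support outputs. -/
def IsChannel {X Y : Type*} [Fintype Y] (W : X → Y → ℝ) : Prop :=
  ∀ x, (∀ y, 0 < W x y) ∧ ∑ y, W x y = 1

/-- An adaptive strategy: for each step `k`, a conditional distribution of the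
`(k+1)`-st input given the first `k` input-output pairs. -/
def IsStrategy {X Y : Type*} [Fintype X]
    (strat : (k : ℕ) → (Fin k → X × Y) → X → ℝ) : Prop :=
  ∀ k h, (∀ x, 0 ≤ strat k h x) ∧ ∑ x, strat k h x = 1

/-- Joint distribution of `n` adaptive input-output pairs under channel `W`. -/
noncomputable def Qdist {X Y : Type*} [Fintype X] [Fintype Y] (W : X → Y → ℝ)
    (strat : (k : ℕ) → (Fin k → X × Y) → X → ℝ) (n : ℕ) (h : Fin n → X × Y) : ℝ :=
  ∏ k : Fin n,
    strat k.1 (fun j : Fin k.1 => h ⟨j.1, j.2.trans k.2⟩) (h k).1 * W (h k).1 (h k).2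

/-- Marginal distribution of the `(k+1)`-st input under channel `W`. -/
noncomputable def inMarg {X Y : Type*} [Fintype X] [Fintype Y] (W : X → Y → ℝ)
    (strat : (k : ℕ) → (Fin k → X × Y) → X → ℝ) (k : ℕ) (x : X) : ℝ :=
  ∑ h : Fin k → X × Y, Qdist W strat k h * strat k h x

/-- Kullback–Leibler divergence of finitely supported distributions. -/
noncomputable def Dkl {α : Type*} [Fintype α] (P Q : α → ℝ) : ℝ :=
  ∑ a, P a * Real.log (P a / Q a)

/-- `φ(s|P‖Q) = log ∑ Q^s P^{1-s}`. -/
noncomputable def phiRel {α : Type*} [Fintype α] (s : ℝ) (P Q : α → ℝ) : ℝ :=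
  Real.log (∑ a, Q a ^ s * P a ^ (1 - s))

section Aux
variable {X Y : Type*} [Fintype X] [Fintype Y]

lemma snoc_lt {n : ℕ} {α : Type*} (g : Fin n → α) (a : α) (i : Fin (n+1)) (hi : i.1 < n) :
    Fin.snoc (α := fun _ => α) g a i = g ⟨i.1, hi⟩ := by
  simp [Fin.snoc, hi]; rfl

lemma Qdist_snoc (W : X → Y → ℝ) (strat : (k : ℕ) → (Fin k → X × Y) → X → ℝ)
    (n : ℕ) (g : Fin n → X × Y) (p : X × Y) :
    Qdist W strat (n+1) (Fin.snoc g p) =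
      Qdist W strat n g * (strat n g p.1 * W p.1 p.2) := by
  rw [Qdist, Qdist, Fin.prod_univ_castSucc]
  congr 1
  · refine Finset.prod_congr rfl fun k _ => ?_
    have e1 : Fin.snoc (α := fun _ => X × Y) g p (Fin.castSucc k) = g k := by simp
    rw [e1]
    congr 1
    · congr 1
      funext j
      rw [snoc_lt g p _ (j.2.trans k.2)]
  · have e1 : Fin.snoc (α := fun _ => X × Y) g p (Fin.last n) = p := by simp
    rw [e1]
    congr 1
    congr 1
    funext j
    rw [snoc_lt g p _ j.2]
    exact congrArg g (Fin.ext rfl)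

lemma Qdist_nonneg {W : X → Y → ℝ} (hW : IsChannel W)
    {strat : (k : ℕ) → (Fin k → X × Y) → X → ℝ} (hstrat : IsStrategy strat)
    (n : ℕ) (h : Fin n → X × Y) : 0 ≤ Qdist W strat n h := by
  apply Finset.prod_nonneg
  intro k _
  exact mul_nonneg ((hstrat _ _).1 _) ((hW _).1 _).le

lemma Qdist_pos_iff {W : X → Y → ℝ} (hW : IsChannel W)
    {strat : (k : ℕ) → (Fin k → X × Y) → X → ℝ} (hstrat : IsStrategy strat)
    (n : ℕ) (h : Fin n → X × Y) :
    0 < Qdist W strat n h ↔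
      ∀ k : Fin n, 0 < strat k.1 (fun j : Fin k.1 => h ⟨j.1, j.2.trans k.2⟩) (h k).1 := by
  constructor
  · intro hp k
    rcases ((hstrat _ _).1 (h k).1).lt_or_eq with h' | h'
    · exact h'
    · exfalso
      have : Qdist W strat n h = 0 := by
        apply Finset.prod_eq_zero (Finset.mem_univ k)
        rw [← h', zero_mul]
      linarith
  · intro hp
    apply Finset.prod_pos
    intro k _
    exact mul_pos (hp k) ((hW _).1 _)

lemma rpow_mul_rpow_one_sub {s : ℝ} (hs : s ≤ 0) {t : ℝ} (ht : 0 ≤ t) :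
    t ^ s * t ^ (1 - s) = t := by
  rcases ht.eq_or_lt with h | h
  · rw [← h, show ((0:ℝ) ^ (1 - s)) = 0 from Real.zero_rpow (by linarith), mul_zero]
  · rw [← Real.rpow_add h]
    norm_num

end Aux

section Chain
variable {X Y : Type*} [Fintype X] [Fintype Y] [Nonempty X]

lemma chain_le {W Wb : X → Y → ℝ} (hW : IsChannel W) (hWb : IsChannel Wb)
    {strat : (k : ℕ) → (Fin k → X × Y) → X → ℝ} (hstrat : IsStrategy strat)
    {s : ℝ} (hs : s ≤ 0) (n : ℕ) :
    ∑ h : Fin n → X × Y, Qdist Wb strat n h ^ s * Qdist W strat n h ^ (1 - s)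
      ≤ Real.exp (⨆ x, phiRel s (W x) (Wb x)) ^ n := by
  have hYne : Nonempty Y := by
    by_contra hY
    have h1 := (hW (Classical.arbitrary X)).2
    have : IsEmpty Y := not_nonempty_iff.1 hY
    rw [Finset.univ_eq_empty (α := Y), Finset.sum_empty] at h1
    norm_num at h1
  induction n with
  | zero => simp [Qdist]
  | succ n ih =>
    set C := Real.exp (⨆ x, phiRel s (W x) (Wb x)) with hC
    have hC0 : 0 < C := Real.exp_pos _
    rw [← Equiv.sum_comp (Fin.snocEquiv (fun _ : Fin (n+1) => X × Y))
      (fun h => Qdist Wb strat (n+1) h ^ s * Qdist W strat (n+1) h ^ (1 - s)),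
      Fintype.sum_prod_type, Finset.sum_comm]
    have term_nonneg : ∀ g : Fin n → X × Y,
        0 ≤ Qdist Wb strat n g ^ s * Qdist W strat n g ^ (1 - s) := fun g =>
      mul_nonneg (Real.rpow_nonneg (Qdist_nonneg hWb hstrat n g) s)
        (Real.rpow_nonneg (Qdist_nonneg hW hstrat n g) (1 - s))
    have key : ∀ (g : Fin n → X × Y) (a : X × Y),
        Qdist Wb strat (n+1) (Fin.snoc g a) ^ s * Qdist W strat (n+1) (Fin.snoc g a) ^ (1 - s)
          = (Qdist Wb strat n g ^ s * Qdist W strat n g ^ (1 - s)) *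
            (strat n g a.1 * (Wb a.1 a.2 ^ s * W a.1 a.2 ^ (1 - s))) := by
      intro g a
      have hg := Qdist_nonneg hW hstrat n g
      have hgb := Qdist_nonneg hWb hstrat n g
      have hst := (hstrat n g).1 a.1
      have ht : strat n g a.1 ^ s * strat n g a.1 ^ (1 - s) = strat n g a.1 :=
        rpow_mul_rpow_one_sub hs hst
      rw [Qdist_snoc, Qdist_snoc,
        Real.mul_rpow hgb (mul_nonneg hst ((hWb _).1 _).le),
        Real.mul_rpow hg (mul_nonneg hst ((hW _).1 _).le),
        Real.mul_rpow hst ((hWb _).1 _).le,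
        Real.mul_rpow hst ((hW _).1 _).le]
      linear_combination (Qdist Wb strat n g ^ s * Qdist W strat n g ^ (1 - s) *
        (Wb a.1 a.2 ^ s * W a.1 a.2 ^ (1 - s))) * ht
    have inner_le : ∀ g : Fin n → X × Y,
        ∑ a : X × Y, strat n g a.1 * (Wb a.1 a.2 ^ s * W a.1 a.2 ^ (1 - s)) ≤ C := by
      intro g
      rw [Fintype.sum_prod_type]
      have hx : ∀ x, ∑ y, Wb x y ^ s * W x y ^ (1 - s)
          = Real.exp (phiRel s (W x) (Wb x)) := by
        intro x
        rw [phiRel, Real.exp_log]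
        exact Finset.sum_pos (fun y _ => mul_pos (Real.rpow_pos_of_pos ((hWb x).1 y) s)
          (Real.rpow_pos_of_pos ((hW x).1 y) (1 - s))) Finset.univ_nonempty
      calc ∑ x, ∑ y, strat n g x * (Wb x y ^ s * W x y ^ (1 - s))
          = ∑ x, strat n g x * Real.exp (phiRel s (W x) (Wb x)) := by
            refine Finset.sum_congr rfl fun x _ => ?_
            rw [← Finset.mul_sum, hx]
        _ ≤ ∑ x, strat n g x * C := by
            refine Finset.sum_le_sum fun x _ => ?_
            exact mul_le_mul_of_nonneg_left (Real.exp_le_exp.2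
              (le_ciSup (Set.Finite.bddAbove
                (Set.finite_range (fun x => phiRel s (W x) (Wb x)))) x)) ((hstrat n g).1 x)
        _ = C := by rw [← Finset.sum_mul, (hstrat n g).2, one_mul]
    calc ∑ g : Fin n → X × Y, ∑ a : X × Y,
          Qdist Wb strat (n+1) ((Fin.snocEquiv (fun _ : Fin (n+1) => X × Y)) (a, g)) ^ s *
            Qdist W strat (n+1) ((Fin.snocEquiv (fun _ : Fin (n+1) => X × Y)) (a, g)) ^ (1 - s)
        = ∑ g : Fin n → X × Y, (Qdist Wb strat n g ^ s * Qdist W strat n g ^ (1 - s)) *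
            ∑ a : X × Y, strat n g a.1 * (Wb a.1 a.2 ^ s * W a.1 a.2 ^ (1 - s)) := by
          refine Finset.sum_congr rfl fun g _ => ?_
          rw [Finset.mul_sum]
          exact Finset.sum_congr rfl fun a _ => key g a
      _ ≤ ∑ g : Fin n → X × Y, (Qdist Wb strat n g ^ s * Qdist W strat n g ^ (1 - s)) * C := by
          refine Finset.sum_le_sum fun g _ => ?_
          exact mul_le_mul_of_nonneg_left (inner_le g) (term_nonneg g)
      _ = (∑ g : Fin n → X × Y, Qdist Wb strat n g ^ s * Qdist W strat n g ^ (1 - s)) * C :=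
          (Finset.sum_mul _ _ _).symm
      _ ≤ C ^ n * C := mul_le_mul_of_nonneg_right ih hC0.le
      _ = C ^ (n + 1) := (pow_succ C n).symm

end Chain

section Main
variable {X Y : Type*} [Fintype X] [Fintype Y]

lemma phiRel_nonneg {W Wb : X → Y → ℝ} (hW : IsChannel W) (hWb : IsChannel Wb)
    {s : ℝ} (hs : s ≤ 0) (x : X) : 0 ≤ phiRel s (W x) (Wb x) := by
  have hYne : Nonempty Y := by
    by_contra hY
    have h1 := (hW x).2
    have : IsEmpty Y := not_nonempty_iff.1 hY
    rw [Finset.univ_eq_empty (α := Y), Finset.sum_empty] at h1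
    norm_num at h1
  rcases hs.lt_or_eq with hs' | hs'
  · -- s < 0
    have h1s : (0:ℝ) < 1 - s := by linarith
    have hsne : s ≠ 0 := hs'.ne
    have h1sne : (1:ℝ) - s ≠ 0 := h1s.ne'
    have hns : (0:ℝ) < -s := by linarith
    have hTpos : 0 < ∑ y, Wb x y ^ s * W x y ^ (1 - s) :=
      Finset.sum_pos (fun y _ => mul_pos (Real.rpow_pos_of_pos ((hWb x).1 y) s)
        (Real.rpow_pos_of_pos ((hW x).1 y) (1 - s)))
        (Finset.univ_nonempty (α := Y))
    apply Real.log_nonneg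
    set u : Y → ℝ := fun y => (Wb x y ^ s * W x y ^ (1 - s)) ^ (1 / (1 - s)) with hu
    set v : Y → ℝ := fun y => Wb x y ^ (-s / (1 - s)) with hv
    have hpq : Real.HolderConjugate (1 - s) ((1 - s) / (-s)) := by
      rw [Real.holderConjugate_iff]; constructor
      · linarith
      · rw [inv_div]
        field_simp
        ring
    have key := Real.inner_le_Lp_mul_Lq Finset.univ u v hpq
    have huv : ∀ y, u y * v y = W x y := by
      intro y
      have hWb' := (hWb x).1 y
      have hW' := (hW x).1 y
      have e1 : s * (1 / (1 - s)) + -s / (1 - s) = 0 := by field_simp; ring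
      calc u y * v y
          = Wb x y ^ (s * (1 / (1 - s))) * W x y ^ ((1 - s) * (1 / (1 - s))) *
              Wb x y ^ (-s / (1 - s)) := by
            simp only [hu, hv]
            rw [Real.mul_rpow (Real.rpow_nonneg hWb'.le s) (Real.rpow_nonneg hW'.le (1 - s)),
              ← Real.rpow_mul hWb'.le, ← Real.rpow_mul hW'.le]
        _ = Wb x y ^ (s * (1 / (1 - s))) * Wb x y ^ (-s / (1 - s)) * W x y := by
            rw [mul_one_div_cancel h1sne, Real.rpow_one]; ring
        _ = W x y := by
            rw [← Real.rpow_add hWb', e1, Real.rpow_zero, one_mul]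
    have habs_u : ∀ y, |u y| ^ (1 - s) = Wb x y ^ s * W x y ^ (1 - s) := by
      intro y
      have h0 : (0:ℝ) ≤ Wb x y ^ s * W x y ^ (1 - s) :=
        mul_nonneg (Real.rpow_nonneg ((hWb x).1 y).le s) (Real.rpow_nonneg ((hW x).1 y).le (1 - s))
      rw [hu, abs_of_nonneg (Real.rpow_nonneg h0 _), ← Real.rpow_mul h0,
        one_div_mul_cancel h1sne, Real.rpow_one]
    have habs_v : ∀ y, |v y| ^ ((1 - s) / (-s)) = Wb x y := by
      intro y
      have e2 : -s / (1 - s) * ((1 - s) / (-s)) = 1 := by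
        field_simp
      rw [hv, abs_of_nonneg (Real.rpow_nonneg ((hWb x).1 y).le _),
        ← Real.rpow_mul ((hWb x).1 y).le, e2, Real.rpow_one]
    rw [Finset.sum_congr rfl (fun y _ => huv y),
      Finset.sum_congr rfl (fun y _ => habs_u y),
      Finset.sum_congr rfl (fun y _ => habs_v y), (hW x).2, (hWb x).2,
      Real.one_rpow, mul_one] at key
    by_contra hlt
    push_neg at hlt
    have : (∑ y, Wb x y ^ s * W x y ^ (1 - s)) ^ (1 / (1 - s)) < 1 :=
      Real.rpow_lt_one hTpos.le hlt (by positivity)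
    linarith
  · subst hs'
    simp [phiRel, Real.rpow_zero, Real.rpow_one, (hW x).2]

lemma Qdist_zero_trans {W Wb : X → Y → ℝ} (hW : IsChannel W) (hWb : IsChannel Wb)
    {strat : (k : ℕ) → (Fin k → X × Y) → X → ℝ} (hstrat : IsStrategy strat)
    (n : ℕ) (h : Fin n → X × Y) (h0 : Qdist Wb strat n h = 0) : Qdist W strat n h = 0 := by
  by_contra hne
  have hpos : 0 < Qdist W strat n h := (Qdist_nonneg hW hstrat n h).lt_of_ne (Ne.symm hne)
  have : 0 < Qdist Wb strat n h :=
    (Qdist_pos_iff hWb hstrat n h).2 ((Qdist_pos_iff hW hstrat n h).1 hpos)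
  linarith

end Main

theorem stmt10 {X Y : Type*} [Fintype X] [Fintype Y] [Nonempty X]
    (W Wb : X → Y → ℝ) (hW : IsChannel W) (hWb : IsChannel Wb)
    (strat : (k : ℕ) → (Fin k → X × Y) → X → ℝ) (hstrat : IsStrategy strat)
    (n : ℕ) (f : (Fin n → X × Y) → ℝ) (hf : ∀ h, f h ∈ Set.Icc (0 : ℝ) 1)
    (s : ℝ) (hs : s ≤ 0) :
    (1 - s) * Real.log (∑ h : Fin n → X × Y, Qdist W strat n h * (1 - f h)) ≤
      -s * Real.log (∑ h : Fin n → X × Y, Qdist Wb strat n h * (1 - f h)) +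
        n * ⨆ x, phiRel s (W x) (Wb x) := by
  classical
  have hQnn : ∀ h, 0 ≤ Qdist W strat n h := Qdist_nonneg hW hstrat n
  have hQbnn : ∀ h, 0 ≤ Qdist Wb strat n h := Qdist_nonneg hWb hstrat n
  have hfnn : ∀ h : Fin n → X × Y, 0 ≤ 1 - f h := fun h => by linarith [(hf h).2]
  have hfle : ∀ h : Fin n → X × Y, 1 - f h ≤ 1 := fun h => by linarith [(hf h).1]
  set Φ := ⨆ x, phiRel s (W x) (Wb x) with hΦ
  set A := ∑ h : Fin n → X × Y, Qdist W strat n h * (1 - f h) with hAdef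
  set B := ∑ h : Fin n → X × Y, Qdist Wb strat n h * (1 - f h) with hBdef
  set T := ∑ h : Fin n → X × Y, Qdist Wb strat n h ^ s * Qdist W strat n h ^ (1 - s) with hTdef
  have hΦ0 : 0 ≤ Φ :=
    le_trans (phiRel_nonneg hW hWb hs (Classical.arbitrary X))
      (le_ciSup (Set.Finite.bddAbove (Set.finite_range (fun x => phiRel s (W x) (Wb x)))) _)
  have hTub : T ≤ Real.exp (n * Φ) := by
    rw [hTdef, Real.exp_nat_mul]
    exact chain_le hW hWb hstrat hs n
  have hAnn : 0 ≤ A :=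
    Finset.sum_nonneg fun h _ => mul_nonneg (hQnn h) (hfnn h)
  have hBnn : 0 ≤ B :=
    Finset.sum_nonneg fun h _ => mul_nonneg (hQbnn h) (hfnn h)
  have hnΦ : (0:ℝ) ≤ n * Φ := mul_nonneg (Nat.cast_nonneg n) hΦ0
  rcases hs.lt_or_eq with hs' | hs'
  · -- s < 0
    have h1s : (0:ℝ) < 1 - s := by linarith
    have hns : (0:ℝ) < -s := by linarith
    by_cases hA0 : A = 0
    · have hall : ∀ h : Fin n → X × Y, Qdist W strat n h * (1 - f h) = 0 := by
        have := (Finset.sum_eq_zero_iff_of_nonneg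
          (fun h _ => mul_nonneg (hQnn h) (hfnn h))).1 hA0.symm.symm
        exact fun h => this h (Finset.mem_univ h)
      have hB0 : B = 0 := by
        rw [hBdef]
        apply Finset.sum_eq_zero
        intro h _
        rcases mul_eq_zero.1 (hall h) with h1 | h1
        · rw [Qdist_zero_trans hWb hW hstrat n h h1, zero_mul]
        · rw [h1, mul_zero]
      rw [hA0, hB0, Real.log_zero, mul_zero, mul_zero, zero_add]
      exact hnΦ
    · have hApos : 0 < A := hAnn.lt_of_ne (Ne.symm hA0)
      obtain ⟨h₀, hh₀⟩ : ∃ h, 0 < Qdist W strat n h * (1 - f h) := by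
        by_contra hc
        push_neg at hc
        have : A ≤ 0 := hAdef ▸ Finset.sum_nonpos fun h _ => hc h
        linarith
      have hQ0 : 0 < Qdist W strat n h₀ := by
        rcases (hQnn h₀).lt_or_eq with h' | h'
        · exact h'
        · exfalso; rw [← h', zero_mul] at hh₀; exact lt_irrefl 0 hh₀
      have hf0 : 0 < 1 - f h₀ := by
        by_contra hc
        push_neg at hc
        nlinarith
      have hQb0 : 0 < Qdist Wb strat n h₀ :=
        (Qdist_pos_iff hWb hstrat n h₀).2 ((Qdist_pos_iff hW hstrat n h₀).1 hQ0)
      have hBpos : 0 < B := by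
        rw [hBdef]
        exact Finset.sum_pos' (fun h _ => mul_nonneg (hQbnn h) (hfnn h))
          ⟨h₀, Finset.mem_univ h₀, mul_pos hQb0 hf0⟩
      have hTpos : 0 < T := by
        rw [hTdef]
        exact Finset.sum_pos' (fun h _ => mul_nonneg (Real.rpow_nonneg (hQbnn h) s)
            (Real.rpow_nonneg (hQnn h) (1 - s)))
          ⟨h₀, Finset.mem_univ h₀, mul_pos (Real.rpow_pos_of_pos hQb0 s)
            (Real.rpow_pos_of_pos hQ0 (1 - s))⟩
      set p := (1 - s) / (-s) with hp
      set q := 1 - s with hq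
      have hppos : 0 < p := div_pos h1s hns
      have e3 : 1 / p = -s / (1 - s) := by rw [hp, one_div_div]
      have e7 : (1 - s) * (1 / q) = 1 := by rw [hq, mul_one_div_cancel h1s.ne']
      have e6 : (1 - s) * (1 / p) = -s := by
        rw [e3, mul_div_assoc']; exact mul_div_cancel_left₀ (-s) (show (1:ℝ) - s ≠ 0 by linarith)
      have hpq : Real.HolderConjugate p q := by
        rw [Real.holderConjugate_iff]; constructor
        · rw [hp]
          rw [lt_div_iff₀ hns]
          linarith
        · rw [hp, hq, inv_div]
          linear_combination mul_inv_cancel₀ (show (1:ℝ) - s ≠ 0 by linarith)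
      set u : (Fin n → X × Y) → ℝ := fun h => ((1 - f h) * Qdist Wb strat n h) ^ (1 / p) with hu
      set v : (Fin n → X × Y) → ℝ := fun h =>
        (1 - f h) ^ (1 / q) * Qdist W strat n h * Qdist Wb strat n h ^ (s / (1 - s)) with hv
      have key := Real.inner_le_Lp_mul_Lq Finset.univ u v hpq
      have huv : ∀ h, u h * v h = Qdist W strat n h * (1 - f h) := by
        intro h
        simp only [hu, hv]
        rcases (hQbnn h).eq_or_lt with hb | hb
        · rw [Qdist_zero_trans hW hWb hstrat n h hb.symm]
          ring
        · rcases (hfnn h).eq_or_lt with hf1 | hf1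
          · rw [← hf1, zero_mul, Real.zero_rpow (one_div_ne_zero hppos.ne')]
            ring
          · have e5 : 1 / p + s / (1 - s) = 0 := by rw [e3]; field_simp; ring
            have hq5 : 1 / p + 1 / q = 1 := by
              have := hpq.inv_add_inv_eq_one
              rw [one_div, one_div]
              exact this
            rw [Real.mul_rpow hf1.le (hQbnn h)]
            calc (1 - f h) ^ (1 / p) * Qdist Wb strat n h ^ (1 / p) *
                  ((1 - f h) ^ (1 / q) * Qdist W strat n h * Qdist Wb strat n h ^ (s / (1 - s)))
                = ((1 - f h) ^ (1 / p) * (1 - f h) ^ (1 / q)) *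
                  (Qdist Wb strat n h ^ (1 / p) * Qdist Wb strat n h ^ (s / (1 - s))) *
                  Qdist W strat n h := by ring
              _ = Qdist W strat n h * (1 - f h) := by
                  rw [← Real.rpow_add hf1, ← Real.rpow_add hb, hq5, e5, Real.rpow_one,
                    Real.rpow_zero, mul_one]
                  ring
      have sum_u : ∑ h : Fin n → X × Y, |u h| ^ p = B := by
        rw [hBdef]
        refine Finset.sum_congr rfl fun h _ => ?_
        have h0 : (0:ℝ) ≤ (1 - f h) * Qdist Wb strat n h := mul_nonneg (hfnn h) (hQbnn h)
        rw [hu, abs_of_nonneg (Real.rpow_nonneg h0 _), ← Real.rpow_mul h0,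
          one_div_mul_cancel hppos.ne', Real.rpow_one, mul_comm]
      have sum_v : ∑ h : Fin n → X × Y, |v h| ^ q ≤ T := by
        rw [hTdef]
        refine Finset.sum_le_sum fun h _ => ?_
        have hv0 : 0 ≤ v h := by
          rw [hv]
          exact mul_nonneg (mul_nonneg (Real.rpow_nonneg (hfnn h) _) (hQnn h))
            (Real.rpow_nonneg (hQbnn h) _)
        have e8 : s / (1 - s) * q = s := by rw [hq]; field_simp; exact mul_div_cancel_right₀ s (show (1:ℝ) - s ≠ 0 by linarith)
        have e9 : 1 / q * q = 1 := one_div_mul_cancel h1s.ne'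
        rw [abs_of_nonneg hv0, hv,
          Real.mul_rpow (mul_nonneg (Real.rpow_nonneg (hfnn h) _) (hQnn h))
            (Real.rpow_nonneg (hQbnn h) _),
          Real.mul_rpow (Real.rpow_nonneg (hfnn h) _) (hQnn h),
          ← Real.rpow_mul (hfnn h), ← Real.rpow_mul (hQbnn h), e8, e9, Real.rpow_one, hq]
        calc (1 - f h) * Qdist W strat n h ^ (1 - s) * Qdist Wb strat n h ^ s
            ≤ 1 * (Qdist W strat n h ^ (1 - s) * Qdist Wb strat n h ^ s) := by
              rw [mul_assoc]
              exact mul_le_mul_of_nonneg_right (hfle h)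
                (mul_nonneg (Real.rpow_nonneg (hQnn h) _) (Real.rpow_nonneg (hQbnn h) _))
          _ = Qdist Wb strat n h ^ s * Qdist W strat n h ^ (1 - s) := by ring
      have keyA : A ≤ B ^ (1 / p) * T ^ (1 / q) := by
        have h1 : A = ∑ h : Fin n → X × Y, u h * v h := by
          rw [hAdef]
          exact (Finset.sum_congr rfl fun h _ => (huv h).symm)
        rw [h1]
        refine le_trans key ?_
        rw [sum_u]
        exact mul_le_mul_of_nonneg_left
          (Real.rpow_le_rpow (Finset.sum_nonneg fun h _ => by positivity) sum_v
            (by positivity)) (Real.rpow_nonneg hBnn _)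
      have hlog : Real.log A ≤ 1 / p * Real.log B + 1 / q * Real.log T := by
        refine le_trans (Real.log_le_log hApos keyA) ?_
        rw [Real.log_mul (Real.rpow_pos_of_pos hBpos _).ne' (Real.rpow_pos_of_pos hTpos _).ne',
          Real.log_rpow hBpos, Real.log_rpow hTpos]
      have hlogT : Real.log T ≤ n * Φ := (Real.log_le_iff_le_exp hTpos).2 hTub
      calc (1 - s) * Real.log A
          ≤ (1 - s) * (1 / p * Real.log B + 1 / q * Real.log T) :=
            mul_le_mul_of_nonneg_left hlog h1s.le
        _ = -s * Real.log B + Real.log T := by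
            rw [mul_add, ← mul_assoc, ← mul_assoc, e6, e7, one_mul]
        _ ≤ -s * Real.log B + ↑n * Φ := by linarith
  · subst hs'
    norm_num
    have hAT : A ≤ T := by
      rw [hAdef, hTdef]
      refine Finset.sum_le_sum fun h _ => ?_
      rw [Real.rpow_zero, one_mul, sub_zero, Real.rpow_one]
      exact mul_le_of_le_one_right (hQnn h) (hfle h)
    rcases hAnn.eq_or_lt with hA0 | hA0
    · rw [← hA0, Real.log_zero]
      simpa using hnΦ
    · have : A ≤ Real.exp (↑n * Φ) := le_trans hAT (by simpa using hTub)
      have := (Real.log_le_iff_le_exp hA0).2 this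
      simpa using this
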